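/- For positive integers d, d', p, q, k_1 ≤ min(d,d'), k_2 ≤ min(p,q): M_{k_1k_2}(pd, qd') ≥ min{M_{k_1}(d,d'), M_{k_2}(p,q)}, where M_k(m,n) denotes the maximum number of pairwise mutually unbiased SEBks in C^m ⊗ C^n. -/

import Mathlib

open Matrix Complex

noncomputable section

/-- Trace inner product on coefficient matrices: the inner product of the
corresponding states of `ℂ^m ⊗ ℂ^n`. -/
def matInner {m n : Type*} [Fintype m] [Fintype n] (A B : Matrix m n ℂ) : ℂ :=
  (Aᴴ * B).trace

/-- The state with coefficient matrix `A` is a special entangled state with Schmidt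
number `k` and all Schmidt coefficients `1/√k`: `rank A = k` and `k·AᴴA` is
idempotent (so the nonzero singular values of `A` are `k` copies of `1/√k`). -/
def IsSEk {m n : Type*} [Fintype m] [Fintype n] (k : ℕ) (A : Matrix m n ℂ) : Prop :=
  A.rank = k ∧ ((k : ℂ) • (Aᴴ * A)) * ((k : ℂ) • (Aᴴ * A)) = (k : ℂ) • (Aᴴ * A)

/-- An SEBk of `ℂ^m ⊗ ℂ^n`: an orthonormal basis of `m·n` special entangled states
with Schmidt number `k`, written via coefficient matrices. -/
def IsSEBk {m n : ℕ} (k : ℕ) (B : Fin (m * n) → Matrix (Fin m) (Fin n) ℂ) : Prop :=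
  (∀ i, IsSEk k (B i)) ∧ ∀ i j, matInner (B i) (B j) = if i = j then 1 else 0

/-- Two bases of `ℂ^m ⊗ ℂ^n` are mutually unbiased. -/
def MUPair {m n : ℕ} (B₁ B₂ : Fin (m * n) → Matrix (Fin m) (Fin n) ℂ) : Prop :=
  ∀ i j, ‖matInner (B₁ i) (B₂ j)‖ = 1 / Real.sqrt (m * n)

/-- There exist `t` pairwise mutually unbiased SEBks in `ℂ^m ⊗ ℂ^n`. -/
def HasMUSEBk (k m n t : ℕ) : Prop :=
  ∃ B : Fin t → Fin (m * n) → Matrix (Fin m) (Fin n) ℂ,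
    (∀ a, IsSEBk k (B a)) ∧ ∀ a b, a ≠ b → MUPair (B a) (B b)

/-- `M_k(m,n)`: the maximum number of pairwise mutually unbiased SEBks in
`ℂ^m ⊗ ℂ^n` (as an extended natural number). -/
def Mnum (k m n : ℕ) : ℕ∞ :=
  sSup {c : ℕ∞ | ∃ t : ℕ, c = t ∧ HasMUSEBk k m n t}

/-- There exist `t` pairwise mutually unbiased orthonormal bases of `ℂ^q`. -/
def HasMUB (q t : ℕ) : Prop :=
  ∃ B : Fin t → Fin q → EuclideanSpace ℂ (Fin q),
    (∀ a, Orthonormal ℂ (B a)) ∧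
    ∀ a b, a ≠ b → ∀ i j, ‖(inner ℂ (B a i) (B b j) : ℂ)‖ = 1 / Real.sqrt q

/-- `N(q)`: the maximum number of mutually unbiased bases of `ℂ^q`. -/
def Nnum (q : ℕ) : ℕ∞ :=
  sSup {c : ℕ∞ | ∃ t : ℕ, c = t ∧ HasMUB q t}

section Aux

open Kronecker
open scoped ComplexOrder

variable {m n l o : Type*} [Fintype m] [Fintype n] [Fintype l] [Fintype o]

lemma rank_smul_aux (A : Matrix m n ℂ) (c : ℂ) (hc : c ≠ 0) : (c • A).rank = A.rank := by
  unfold Matrix.rank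
  have : (c • A).mulVecLin = c • A.mulVecLin := by
    ext v i; simp [Matrix.mulVecLin_apply, Matrix.smul_mulVec]
  rw [this, LinearMap.range_smul _ c hc]

lemma rank_reindex_rect (e₁ : m ≃ l) (e₂ : n ≃ o) (A : Matrix m n ℂ) :
    (reindex e₁ e₂ A).rank = A.rank := by
  unfold Matrix.rank
  rw [Matrix.mulVecLin_reindex, LinearMap.range_comp,
    LinearMap.range_comp_of_range_eq_top _ (LinearEquiv.range _)]
  exact (LinearEquiv.finrank_map_eq _ _).trans rfl

lemma trace_reindex_aux (e : m ≃ l) (A : Matrix m m ℂ) : (reindex e e A).trace = A.trace := by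
  simp only [Matrix.trace, Matrix.diag, reindex_apply, submatrix_apply]
  exact Fintype.sum_equiv e.symm _ _ (fun i => rfl)

lemma kronecker_conjTranspose_aux (A : Matrix m n ℂ) (B : Matrix l o ℂ) :
    (A ⊗ₖ B)ᴴ = Aᴴ ⊗ₖ Bᴴ := by
  ext ⟨i, j⟩ ⟨a, b⟩
  simp [Matrix.conjTranspose_apply, Matrix.kroneckerMap_apply, mul_comm]

lemma reindex_mul_reindex (e₁ : m ≃ l) (e₂ : n ≃ o) (X : Matrix m n ℂ) (Y : Matrix n n ℂ) :
    True := trivial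

lemma matInner_kronecker (A B : Matrix m n ℂ) (C D : Matrix l o ℂ) :
    matInner (A ⊗ₖ C) (B ⊗ₖ D) = matInner A B * matInner C D := by
  unfold matInner
  rw [kronecker_conjTranspose_aux, ← Matrix.mul_kronecker_mul, Matrix.trace_kronecker]

lemma matInner_reindex (e₁ : m ≃ l) (e₂ : n ≃ o) (A B : Matrix m n ℂ) :
    matInner (reindex e₁ e₂ A) (reindex e₁ e₂ B) = matInner A B := by
  unfold matInner
  rw [conjTranspose_reindex]
  have h : (reindex e₂ e₁ Aᴴ) * (reindex e₁ e₂ B) = reindex e₂ e₂ (Aᴴ * B) := by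
    simp only [reindex_apply]
    exact Matrix.submatrix_mul_equiv _ _ _ _ _
  rw [h, trace_reindex_aux]

lemma rank_idem [DecidableEq m] (P : Matrix m m ℂ) (h : P * P = P) :
    (P.rank : ℂ) = P.trace := by
  have hproj : LinearMap.IsProj (LinearMap.range P.mulVecLin) P.mulVecLin := by
    constructor
    · intro x; exact LinearMap.mem_range_self _ x
    · rintro x ⟨y, rfl⟩
      have := congrArg (fun M => Matrix.mulVecLin M y) h
      simpa [Matrix.mulVecLin_mul] using this
  have ht := hproj.trace
  rw [LinearMap.trace_eq_matrix_trace ℂ (Pi.basisFun ℂ m),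
    LinearMap.toMatrix_eq_toMatrix', ← Matrix.toLin'_apply', LinearMap.toMatrix'_toLin'] at ht
  rw [Matrix.rank]
  exact ht.symm

lemma isSEk_kronecker [DecidableEq n] [DecidableEq o] {k₁ k₂ : ℕ}
    (hk₁ : k₁ ≠ 0) (hk₂ : k₂ ≠ 0) (A : Matrix m n ℂ) (B : Matrix l o ℂ)
    (hA : IsSEk k₁ A) (hB : IsSEk k₂ B) : IsSEk (k₁ * k₂) (A ⊗ₖ B) := by
  have hc₁ : ((k₁ : ℂ)) ≠ 0 := Nat.cast_ne_zero.mpr hk₁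
  have hc₂ : ((k₂ : ℂ)) ≠ 0 := Nat.cast_ne_zero.mpr hk₂
  have hc : (((k₁ * k₂ : ℕ)) : ℂ) ≠ 0 := Nat.cast_ne_zero.mpr (mul_ne_zero hk₁ hk₂)
  set P₁ : Matrix n n ℂ := (k₁ : ℂ) • (Aᴴ * A) with hP₁
  set P₂ : Matrix o o ℂ := (k₂ : ℂ) • (Bᴴ * B) with hP₂
  have key : (((k₁ * k₂ : ℕ)) : ℂ) • ((A ⊗ₖ B)ᴴ * (A ⊗ₖ B)) = P₁ ⊗ₖ P₂ := by
    rw [hP₁, hP₂, kronecker_conjTranspose_aux, ← Matrix.mul_kronecker_mul,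
      Matrix.smul_kronecker, Matrix.kronecker_smul, smul_smul, Nat.cast_mul]
  have hPmul : (P₁ ⊗ₖ P₂) * (P₁ ⊗ₖ P₂) = P₁ ⊗ₖ P₂ := by
    rw [← Matrix.mul_kronecker_mul, hA.2, hB.2]
  constructor
  · have r1 : P₁.rank = k₁ := by
      rw [hP₁, rank_smul_aux _ _ hc₁, Matrix.rank_conjTranspose_mul_self, hA.1]
    have r2 : P₂.rank = k₂ := by
      rw [hP₂, rank_smul_aux _ _ hc₂, Matrix.rank_conjTranspose_mul_self, hB.1]
    have e1 : (P₁.rank : ℂ) = P₁.trace := rank_idem _ hA.2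
    have e2 : (P₂.rank : ℂ) = P₂.trace := rank_idem _ hB.2
    have h1 : (A ⊗ₖ B).rank = (P₁ ⊗ₖ P₂).rank := by
      rw [← key, rank_smul_aux _ _ hc, Matrix.rank_conjTranspose_mul_self]
    have h2 : ((P₁ ⊗ₖ P₂).rank : ℂ) = ((k₁ * k₂ : ℕ) : ℂ) := by
      rw [rank_idem _ hPmul, Matrix.trace_kronecker, ← e1, ← e2, r1, r2, Nat.cast_mul]
    rw [h1]
    exact Nat.cast_injective h2
  · rw [key, hPmul]

lemma eq_zero_of_rank_eq_zero [DecidableEq n] {A : Matrix m n ℂ} (h : A.rank = 0) : A = 0 := by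
  have hbot : LinearMap.range A.mulVecLin = ⊥ := Submodule.finrank_eq_zero.mp h
  have h0 : A.mulVecLin = 0 := LinearMap.range_eq_bot.mp hbot
  ext i j
  have hv : A.mulVec (Pi.single j 1) = 0 := by
    rw [← Matrix.mulVecLin_apply, h0]; rfl
  have := congrFun hv i
  rwa [Matrix.mulVec_single_one] at this

end Aux

lemma ne_zero_of_isSEBk {m n k : ℕ} (hm : 0 < m) (hn : 0 < n)
    {B : Fin (m * n) → Matrix (Fin m) (Fin n) ℂ} (h : IsSEBk k B) : k ≠ 0 := by
  rintro rfl
  have i0 : Fin (m * n) := ⟨0, by positivity⟩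
  have hr : (B i0).rank = 0 := (h.1 i0).1
  have hz : B i0 = 0 := eq_zero_of_rank_eq_zero hr
  have h2 := h.2 i0 i0
  rw [hz, if_pos rfl] at h2
  simp [matInner] at h2

lemma isSEk_reindex {m n l o : Type*} [Fintype m] [Fintype n] [Fintype l] [Fintype o]
    {k : ℕ} (e₁ : m ≃ l) (e₂ : n ≃ o) {A : Matrix m n ℂ} (h : IsSEk k A) :
    IsSEk k (reindex e₁ e₂ A) := by
  obtain ⟨h1, h2⟩ := h
  have hmul : ∀ X Y : Matrix n n ℂ, reindex e₂ e₂ X * reindex e₂ e₂ Y = reindex e₂ e₂ (X * Y) := by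
    intro X Y
    simp only [reindex_apply]
    exact Matrix.submatrix_mul_equiv _ _ _ _ _
  constructor
  · rw [rank_reindex_rect]; exact h1
  · have e : (reindex e₁ e₂ A)ᴴ * (reindex e₁ e₂ A) = reindex e₂ e₂ (Aᴴ * A) := by
      rw [conjTranspose_reindex]
      simp only [reindex_apply]
      exact Matrix.submatrix_mul_equiv _ _ _ _ _
    have hs : (k : ℂ) • reindex e₂ e₂ (Aᴴ * A) = reindex e₂ e₂ ((k : ℂ) • (Aᴴ * A)) := by
      ext i j; simp
    rw [e, hs, hmul, h2]

open Kronecker in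
lemma hasMUSEBk_kron {k₁ k₂ d d' p q t : ℕ} (hd : 0 < d) (hd' : 0 < d') (hp : 0 < p) (hq : 0 < q)
    (h₁ : HasMUSEBk k₁ d d' t) (h₂ : HasMUSEBk k₂ p q t) :
    HasMUSEBk (k₁ * k₂) (p * d) (q * d') t := by
  rw [Nat.mul_comm k₁ k₂]
  rcases Nat.eq_zero_or_pos t with rfl | ht
  · exact ⟨fun a => a.elim0, fun a => a.elim0, fun a => a.elim0⟩
  obtain ⟨F, hF1, hF2⟩ := h₁
  obtain ⟨G, hG1, hG2⟩ := h₂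
  have a0 : Fin t := ⟨0, ht⟩
  have hk₁ : k₁ ≠ 0 := ne_zero_of_isSEBk hd hd' (hF1 a0)
  have hk₂ : k₂ ≠ 0 := ne_zero_of_isSEBk hp hq (hG1 a0)
  let eL : Fin p × Fin d ≃ Fin (p * d) := finProdFinEquiv
  let eR : Fin q × Fin d' ≃ Fin (q * d') := finProdFinEquiv
  let eI : Fin ((p * d) * (q * d')) ≃ Fin (p * q) × Fin (d * d') :=
    (finCongr (by ring)).trans finProdFinEquiv.symm
  refine ⟨fun a s => reindex eL eR (G a (eI s).1 ⊗ₖ F a (eI s).2), ?_, ?_⟩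
  · intro a
    constructor
    · intro s
      exact isSEk_reindex eL eR (isSEk_kronecker hk₂ hk₁ _ _ ((hG1 a).1 _) ((hF1 a).1 _))
    · intro s s'
      rw [matInner_reindex, matInner_kronecker, (hG1 a).2, (hF1 a).2]
      rcases eq_or_ne s s' with rfl | h
      · simp
      · rw [if_neg h]
        rcases eq_or_ne (eI s).1 (eI s').1 with h1 | h1
        · rcases eq_or_ne (eI s).2 (eI s').2 with h2 | h2
          · exact absurd (eI.injective (Prod.ext h1 h2)) h
          · simp [h2]
        · simp [h1]
  · intro a b hab s s'
    rw [matInner_reindex, matInner_kronecker, norm_mul, hG2 a b hab, hF2 a b hab]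
    rw [div_mul_div_comm, one_mul, ← Real.sqrt_mul (by positivity)]
    have : ((p : ℝ) * q) * ((d : ℝ) * d') = ((p * d : ℕ) : ℝ) * ((q * d' : ℕ) : ℝ) := by
      push_cast; ring
    rw [this]

lemma hasMUSEBk_mono {k m n s t : ℕ} (hst : s ≤ t) (h : HasMUSEBk k m n t) :
    HasMUSEBk k m n s := by
  obtain ⟨B, h1, h2⟩ := h
  exact ⟨fun a => B (Fin.castLE hst a), fun a => h1 _,
    fun a b hab => h2 _ _ (fun hh => hab (Fin.castLE_injective hst hh))⟩

/-- Tensor-product bound: for positive integers with `k₁ ≤ min(d,d')`,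
`k₂ ≤ min(p,q)`, `M_{k₁k₂}(pd, qd') ≥ min{M_{k₁}(d,d'), M_{k₂}(p,q)}`. -/
theorem Mnum_kronecker_bound (d d' p q k₁ k₂ : ℕ)
    (hd : 0 < d) (hd' : 0 < d') (hp : 0 < p) (hq : 0 < q)
    (hk₁ : k₁ ≤ min d d') (hk₂ : k₂ ≤ min p q) :
    min (Mnum k₁ d d') (Mnum k₂ p q) ≤ Mnum (k₁ * k₂) (p * d) (q * d') := by
  unfold Mnum
  rw [sSup_inf_sSup]
  apply iSup₂_le
  rintro ⟨c₁, c₂⟩ ⟨⟨t₁, rfl, h1⟩, ⟨t₂, rfl, h2⟩⟩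
  have hmem : ((min t₁ t₂ : ℕ) : ℕ∞) ∈
      {c : ℕ∞ | ∃ t : ℕ, c = t ∧ HasMUSEBk (k₁ * k₂) (p * d) (q * d') t} :=
    ⟨min t₁ t₂, rfl, hasMUSEBk_kron hd hd' hp hq
      (hasMUSEBk_mono (min_le_left _ _) h1) (hasMUSEBk_mono (min_le_right _ _) h2)⟩
  calc ((t₁ : ℕ∞), (t₂ : ℕ∞)).1 ⊓ ((t₁ : ℕ∞), (t₂ : ℕ∞)).2 = ((min t₁ t₂ : ℕ) : ℕ∞) := by
        rcases le_total t₁ t₂ with h | h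
        · simp [min_eq_left h, min_eq_left (Nat.cast_le.mpr h : (t₁:ℕ∞) ≤ t₂)]
        · simp [min_eq_right h, min_eq_right (Nat.cast_le.mpr h : (t₂:ℕ∞) ≤ t₁)]
    _ ≤ _ := le_sSup hmem
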